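/- arXiv:2404.19632 — 5 statements merged into one kernel-verified Lean document; each statement's English description precedes it below -/
import Mathlib

section
/- (Quantalic McShane–Whitney extension theorem) Let V be a quantale and (X,d) a V-category. For any subset Y ⊆ X, any non-expansive map f : (Y, d|_Y) → (V, d_V) admits a non-expansive extension f̄ : (X,d) → (V, d_V) with f̄|_Y = f; concretely, f̄(x) = ⊓_{y∈Y} d_V(d(x,y), f(y)) works. -/
variable {V : Type*}

/-- Residuation (internal hom) of a quantale. -/
def dres [CommMonoid V] [CompleteLattice V] (a c : V) : V := sSup {u | u * a ≤ c}

lemma dres_counit [CommMonoid V] [CompleteLattice V] [IsQuantale V] (a c : V) :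
    dres a c * a ≤ c := by
  rw [dres, sSup_mul_distrib]
  exact iSup₂_le fun u hu => hu

lemma le_dres [CommMonoid V] [CompleteLattice V] (a c u : V) (h : u * a ≤ c) :
    u ≤ dres a c := le_sSup h

/-- Quantalic McShane–Whitney extension theorem. -/
theorem stmt9 [CommMonoid V] [CompleteLattice V] [IsQuantale V]
    {X : Type*} (d : X → X → V)
    (hrefl : ∀ x, (1 : V) ≤ d x x)
    (htrans : ∀ x y z, d x y * d y z ≤ d x z)
    (Y : Set X) (f : Y → V)
    (hf : ∀ y₁ y₂ : Y, d (↑y₁) (↑y₂) ≤ dres (f y₁) (f y₂)) :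
    (∀ x₁ x₂ : X,
        d x₁ x₂ ≤ dres (⨅ y : Y, dres (d x₁ ↑y) (f y)) (⨅ y : Y, dres (d x₂ ↑y) (f y))) ∧
    (∀ y : Y, (⨅ y' : Y, dres (d (↑y) ↑y') (f y')) = f y) := by
  constructor
  · intro x₁ x₂
    apply le_dres
    apply le_iInf
    intro y
    apply le_dres
    calc d x₁ x₂ * (⨅ y : Y, dres (d x₁ ↑y) (f y)) * d x₂ ↑y
        ≤ d x₁ x₂ * dres (d x₁ ↑y) (f y) * d x₂ ↑y := by
          gcongr; exact iInf_le _ y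
      _ = dres (d x₁ ↑y) (f y) * (d x₁ x₂ * d x₂ ↑y) := by rw [mul_comm (d x₁ x₂), mul_assoc]
      _ ≤ dres (d x₁ ↑y) (f y) * d x₁ ↑y := by
          gcongr; exact htrans x₁ x₂ y
      _ ≤ f y := dres_counit _ _
  · intro y
    apply le_antisymm
    · calc (⨅ y' : Y, dres (d (↑y) ↑y') (f y')) ≤ dres (d ↑y ↑y) (f y) := iInf_le _ y
        _ = dres (d ↑y ↑y) (f y) * 1 := (mul_one _).symm
        _ ≤ dres (d ↑y ↑y) (f y) * d ↑y ↑y := by gcongr; exact hrefl _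
        _ ≤ f y := dres_counit _ _
    · apply le_iInf
      intro y'
      apply le_dres
      calc f y * d ↑y ↑y' ≤ f y * dres (f y) (f y') := by gcongr; exact hf y y'
        _ = dres (f y) (f y') * f y := mul_comm _ _
        _ ≤ f y' := dres_counit _ _
end

section
/- The function g(x) = ⊔_{y∈Y} f(y) ⊗ d(y,x) is the smallest non-expansive extension of f to X. -/
variable {V : Type*}

theorem le_dres_iff [CommMonoid V] [CompleteLattice V] [IsQuantale V] {u a c : V} :
    u ≤ dres a c ↔ u * a ≤ c := by
  constructor
  · intro h
    calc u * a ≤ dres a c * a := mul_le_mul_left h _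
    _ ≤ c := by
      unfold dres
      rw [IsQuantale.sSup_mul_distrib]
      exact iSup₂_le fun x hx => hx
  · intro h; exact le_sSup h

/-- The function `g x = ⨆ y ∈ Y, f y ⊗ d y x` is the smallest non-expansive extension. -/
theorem stmt11 [CommMonoid V] [CompleteLattice V] [IsQuantale V]
    {X : Type*} (d : X → X → V)
    (hrefl : ∀ x, (1 : V) ≤ d x x)
    (htrans : ∀ x y z, d x y * d y z ≤ d x z)
    (Y : Set X) (f : Y → V)
    (hf : ∀ y₁ y₂ : Y, d (↑y₁) (↑y₂) ≤ dres (f y₁) (f y₂)) :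
    (∀ x₁ x₂, d x₁ x₂ ≤ dres (⨆ y : Y, f y * d (↑y) x₁) (⨆ y : Y, f y * d (↑y) x₂)) ∧
    (∀ y : Y, (⨆ y' : Y, f y' * d (↑y') ↑y) = f y) ∧
    (∀ h : X → V, (∀ x₁ x₂, d x₁ x₂ ≤ dres (h x₁) (h x₂)) → (∀ y : Y, h ↑y = f y) →
      ∀ x, (⨆ y : Y, f y * d (↑y) x) ≤ h x) := by
  refine ⟨?_, ?_, ?_⟩
  · intro x₁ x₂
    rw [le_dres_iff, Quantale.mul_iSup_distrib]
    refine iSup_le fun y => ?_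
    calc d x₁ x₂ * (f y * d (↑y) x₁) = f y * (d (↑y) x₁ * d x₁ x₂) := by
          rw [mul_comm (d x₁ x₂), mul_assoc]
    _ ≤ f y * d (↑y) x₂ := mul_le_mul_right (htrans _ _ _) _
    _ ≤ _ := le_iSup (fun y : Y => f y * d (↑y) x₂) y
  · intro y
    apply le_antisymm
    · refine iSup_le fun y' => ?_
      have := le_dres_iff.mp (hf y' y)
      rw [mul_comm] at this
      exact this
    · calc f y = f y * 1 := (mul_one _).symm
      _ ≤ f y * d (↑y) ↑y := mul_le_mul_right (hrefl _) _
      _ ≤ _ := le_iSup (fun y' : Y => f y' * d (↑y') ↑y) y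
  · intro h hh hext x
    refine iSup_le fun y => ?_
    have := le_dres_iff.mp (hh (↑y) x)
    rw [mul_comm] at this
    rw [← hext y] at *
    exact this
end

section
/- If d is a V-category structure on X then α_X(γ_X(d)) = d, i.e., the co-closure of the Galois connection (γ,α) is the identity on V-categories. -/
variable {V X : Type*}

/-- From a set of `V`-valued predicates, the greatest conformance making them non-expansive. -/
def alphaMap [CommMonoid V] [CompleteLattice V] (S : Set (X → V)) : X → X → V :=
  fun x₁ x₂ => ⨅ f ∈ S, dres (f x₁) (f x₂)

/-- The set of predicates non-expansive w.r.t. a `V`-graph `d`. -/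
def gammaMap [CommMonoid V] [CompleteLattice V] (d : X → X → V) : Set (X → V) :=
  {f | ∀ x₁ x₂, d x₁ x₂ ≤ dres (f x₁) (f x₂)}

theorem stmt14 [CommMonoid V] [CompleteLattice V] [IsQuantale V]
    (d : X → X → V)
    (hrefl : ∀ x, (1 : V) ≤ d x x)
    (htrans : ∀ x y z, d x y * d y z ≤ d x z) :
    alphaMap (gammaMap d) = d := by
  have hres : ∀ u a c : V, u ≤ dres a c ↔ u * a ≤ c := fun u a c =>
    Quantale.leftMulResiduation_le_iff_mul_le
  funext x₁ x₂
  apply le_antisymm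
  · have hmem : (fun y => d x₁ y) ∈ gammaMap d := by
      intro a b
      rw [hres]
      calc d a b * d x₁ a = d x₁ a * d a b := mul_comm _ _
        _ ≤ d x₁ b := htrans _ _ _
    calc alphaMap (gammaMap d) x₁ x₂ ≤ dres (d x₁ x₁) (d x₁ x₂) :=
          iInf₂_le _ hmem
      _ ≤ d x₁ x₂ := by
          rw [dres]
          apply sSup_le
          intro u hu
          calc u = u * 1 := (mul_one u).symm
            _ ≤ u * d x₁ x₁ := mul_le_mul_right (hrefl x₁) u
            _ ≤ d x₁ x₂ := hu
  · exact le_iInf₂ fun f hf => hf x₁ x₂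
end

section
/- For any V-graph d on X, α_X(γ_X(d)) is the least V-category structure on X above d: it is a V-category, satisfies d ⊑ α_X(γ_X(d)), and for any V-category d′ on X with d ⊑ d′ one has α_X(γ_X(d)) ⊑ d′. -/
variable {V X : Type*}

lemma dres_le_iff [CommMonoid V] [CompleteLattice V] [IsQuantale V] {a c u : V} :
    u ≤ dres a c ↔ u * a ≤ c := by
  constructor
  · intro h
    calc u * a ≤ dres a c * a := mul_le_mul_left h a
    _ = ⨆ x ∈ {u | u * a ≤ c}, x * a := sSup_mul_distrib
    _ ≤ c := by
        apply iSup₂_le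
        intro x hx; exact hx
  · intro h; exact le_sSup h

lemma le_dres_self [CommMonoid V] [CompleteLattice V] [IsQuantale V] {u a c : V}
    (h : u * a ≤ c) : u ≤ dres a c := le_sSup h

theorem stmt15 [CommMonoid V] [CompleteLattice V] [IsQuantale V]
    (d : X → X → V) :
    (∀ x, (1 : V) ≤ alphaMap (gammaMap d) x x) ∧
    (∀ x y z, alphaMap (gammaMap d) x y * alphaMap (gammaMap d) y z ≤ alphaMap (gammaMap d) x z) ∧
    (∀ x₁ x₂, d x₁ x₂ ≤ alphaMap (gammaMap d) x₁ x₂) ∧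
    (∀ d' : X → X → V, (∀ x, (1 : V) ≤ d' x x) → (∀ x y z, d' x y * d' y z ≤ d' x z) →
      (∀ x₁ x₂, d x₁ x₂ ≤ d' x₁ x₂) →
      ∀ x₁ x₂, alphaMap (gammaMap d) x₁ x₂ ≤ d' x₁ x₂) := by
  refine ⟨?_, ?_, ?_, ?_⟩
  · intro x
    apply le_iInf₂; intro f _
    exact le_dres_self (by simp)
  · intro x y z
    apply le_iInf₂; intro f hf
    rw [dres_le_iff]
    have h1 : alphaMap (gammaMap d) x y ≤ dres (f x) (f y) := iInf₂_le f hf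
    have h2 : alphaMap (gammaMap d) y z ≤ dres (f y) (f z) := iInf₂_le f hf
    calc alphaMap (gammaMap d) x y * alphaMap (gammaMap d) y z * f x
        = alphaMap (gammaMap d) y z * (alphaMap (gammaMap d) x y * f x) := by
          rw [mul_comm (alphaMap (gammaMap d) x y), mul_assoc]
      _ ≤ alphaMap (gammaMap d) y z * f y :=
          mul_le_mul_right ((dres_le_iff).mp h1) _
      _ ≤ f z := (dres_le_iff).mp h2
  · intro x₁ x₂
    apply le_iInf₂; intro f hf
    exact hf x₁ x₂
  · intro d' hrefl htrans hle x₁ x₂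
    have hf : (fun y => d' x₁ y) ∈ gammaMap d := by
      intro a b
      apply le_dres_self
      calc d a b * d' x₁ a ≤ d' a b * d' x₁ a := mul_le_mul_left (hle a b) _
        _ = d' x₁ a * d' a b := mul_comm _ _
        _ ≤ d' x₁ b := htrans _ _ _
    calc alphaMap (gammaMap d) x₁ x₂ ≤ dres (d' x₁ x₁) (d' x₁ x₂) := iInf₂_le _ hf
      _ ≤ d' x₁ x₂ := by
          apply sSup_le; intro u hu
          calc u = u * 1 := (mul_one u).symm
            _ ≤ u * d' x₁ x₁ := mul_le_mul_right (hrefl x₁) u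
            _ ≤ d' x₁ x₂ := hu
end

section
/- Compositionality fails for the Kantorovich lifting of P∘D with evaluation map sup∘P(E): on the two-element set X = {x,y} with the discrete metric d (d(x,y)=d(y,x)=1, d(x,x)=d(y,y)=0) valued in the quantale ([0,1], ≥, truncated addition), for U = {δ_x, δ_y} and V = {δ_x, ½δ_x+½δ_y, δ_y} ⊆ D(X), the composite Kantorovich lifting gives K_{sup}(K_{E}(d))(U,V) ≥ ½, while the single-step Kantorovich lifting with the composed evaluation map gives K_{sup∗E}(d)(U,V) = 0. -/
open Set

noncomputable section

/-- Residuation (truncated subtraction) of the quantale `[0,1]` with reversed order: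
`tsubR a b = max (b - a) 0`. -/
def tsubR (a b : ℝ) : ℝ := max (b - a) 0

/-- Distributions on the two-element set `Bool`. -/
def DistB := {μ : Bool → ℝ // (∀ b, 0 ≤ μ b) ∧ μ true + μ false = 1}

/-- Expected value of `g` under `μ`. -/
def expectB (μ : DistB) (g : Bool → ℝ) : ℝ := μ.1 true * g true + μ.1 false * g false

/-- Discrete metric on `Bool`. -/
def dDisc (b₁ b₂ : Bool) : ℝ := if b₁ = b₂ then 0 else 1

/-- `g : Bool → [0,1]` is non-expansive from `(Bool, d)` into `([0,1], tsubR)`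
(recall the order of the quantale `[0,1]` is reversed). -/
def nonexpB (d : Bool → Bool → ℝ) (g : Bool → ℝ) : Prop :=
  (∀ b, g b ∈ Icc (0 : ℝ) 1) ∧ ∀ b₁ b₂, tsubR (g b₁) (g b₂) ≤ d b₁ b₂

/-- Kantorovich lifting of the distribution functor with evaluation map `E`
(expected value), applied to a metric `d` on `Bool`. Infimum in the reversed
order is the supremum of the reals. -/
def KE (d : Bool → Bool → ℝ) (μ ν : DistB) : ℝ :=
  sSup {e | ∃ g : Bool → ℝ, nonexpB d g ∧ e = tsubR (expectB μ g) (expectB ν g)}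

/-- Kantorovich lifting of the powerset functor with evaluation map `sup`,
applied to a metric `dD` on `DistB`. -/
def Ksup (dD : DistB → DistB → ℝ) (U W : Set DistB) : ℝ :=
  sSup {e | ∃ h : DistB → ℝ, (∀ μ, h μ ∈ Icc (0 : ℝ) 1) ∧
      (∀ μ ν, tsubR (h μ) (h ν) ≤ dD μ ν) ∧
      e = tsubR (sSup (h '' U)) (sSup (h '' W))}

/-- Single-step Kantorovich lifting of `P ∘ D` with the composed evaluation map
`sup ∗ E = sup ∘ P(E)`. -/
def KsupE (d : Bool → Bool → ℝ) (U W : Set DistB) : ℝ :=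
  sSup {e | ∃ g : Bool → ℝ, nonexpB d g ∧
      e = tsubR (sSup ((fun μ => expectB μ g) '' U)) (sSup ((fun μ => expectB μ g) '' W))}

/-- Dirac distribution. -/
def dirac (b : Bool) : DistB :=
  ⟨fun b' => if b' = b then 1 else 0, by
    refine ⟨fun b' => ?_, ?_⟩
    · dsimp only; split <;> norm_num
    · cases b <;> simp⟩

/-- The uniform distribution `½·x + ½·y`. -/
def halfhalf : DistB := ⟨fun _ => 1 / 2, ⟨fun _ => by norm_num, by norm_num⟩⟩


-- auxiliary lemmas
lemma expect_dirac (b : Bool) (g : Bool → ℝ) : expectB (dirac b) g = g b := by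
  cases b <;> simp [expectB, dirac]

lemma expect_half (g : Bool → ℝ) : expectB halfhalf g = (g true + g false) / 2 := by
  simp [expectB, halfhalf]; ring

lemma expect_mem (μ : DistB) {g : Bool → ℝ} (hg : ∀ b, g b ∈ Icc (0:ℝ) 1) :
    expectB μ g ∈ Icc (0:ℝ) 1 := by
  obtain ⟨ht, hf⟩ := μ.2
  obtain ⟨h1, h2⟩ := hg true
  obtain ⟨h3, h4⟩ := hg false
  constructor
  · have := ht true; have := ht false
    unfold expectB; positivity
  · unfold expectB
    nlinarith [ht true, ht false]

lemma tsubR_mem {a b : ℝ} (ha : 0 ≤ a) (hb : b ≤ 1) : tsubR a b ∈ Icc (0:ℝ) 1 := by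
  unfold tsubR
  constructor
  · exact le_max_right _ _
  · apply max_le <;> linarith

lemma KE_bdd (μ ν : DistB) :
    BddAbove {e | ∃ g : Bool → ℝ, nonexpB dDisc g ∧ e = tsubR (expectB μ g) (expectB ν g)} := by
  refine ⟨1, fun e he => ?_⟩
  obtain ⟨g, ⟨hg, _⟩, rfl⟩ := he
  exact (tsubR_mem (expect_mem μ hg).1 (expect_mem ν hg).2).2

lemma KE_ge (μ ν : DistB) {g : Bool → ℝ} (hg : nonexpB dDisc g) :
    tsubR (expectB μ g) (expectB ν g) ≤ KE dDisc μ ν :=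
  le_csSup (KE_bdd μ ν) ⟨g, hg, rfl⟩

lemma nonexp_ind (b : Bool) : nonexpB dDisc (fun b' => if b' = b then 1 else 0) := by
  constructor
  · intro b'; dsimp only; split <;> norm_num
  · intro b₁ b₂
    unfold tsubR dDisc
    rcases eq_or_ne b₁ b₂ with h | h
    · subst h; simp
    · simp only [if_neg h]
      apply max_le
      · split <;> split <;> norm_num
      · norm_num

/-- The key lower bound: `KE dDisc μ ν ≥ max (ν b - μ b) 0` for each `b`. -/
lemma KE_ge_coord (μ ν : DistB) (b : Bool) :
    max (ν.1 b - μ.1 b) 0 ≤ KE dDisc μ ν := by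
  have h := KE_ge μ ν (nonexp_ind b)
  have e1 : expectB μ (fun b' => if b' = b then 1 else 0) = μ.1 b := by
    cases b <;> simp [expectB]
  have e2 : expectB ν (fun b' => if b' = b then 1 else 0) = ν.1 b := by
    cases b <;> simp [expectB]
  rwa [e1, e2] at h

lemma DistB_le_one (μ : DistB) (b : Bool) : μ.1 b ≤ 1 := by
  obtain ⟨ht, hf⟩ := μ.2
  have := ht true; have := ht false
  cases b <;> linarith

/-- the witness function for part 1 -/
def hmin (μ : DistB) : ℝ := min (μ.1 true) (μ.1 false)

lemma hmin_mem (μ : DistB) : hmin μ ∈ Icc (0:ℝ) 1 := by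
  constructor
  · exact le_min (μ.2.1 true) (μ.2.1 false)
  · exact min_le_of_left_le (DistB_le_one μ true)

lemma hmin_nonexp (μ ν : DistB) : tsubR (hmin μ) (hmin ν) ≤ KE dDisc μ ν := by
  have h1 := KE_ge_coord μ ν true
  have h2 := KE_ge_coord μ ν false
  unfold tsubR hmin
  apply max_le
  · rcases le_total (μ.1 true) (μ.1 false) with h | h
    · have : min (ν.1 true) (ν.1 false) - min (μ.1 true) (μ.1 false)
          ≤ ν.1 true - μ.1 true := by
        rw [min_eq_left h]; have := min_le_left (ν.1 true) (ν.1 false); linarith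
      calc _ ≤ ν.1 true - μ.1 true := this
        _ ≤ max (ν.1 true - μ.1 true) 0 := le_max_left _ _
        _ ≤ _ := h1
    · have : min (ν.1 true) (ν.1 false) - min (μ.1 true) (μ.1 false)
          ≤ ν.1 false - μ.1 false := by
        rw [min_eq_right h]; have := min_le_right (ν.1 true) (ν.1 false); linarith
      calc _ ≤ ν.1 false - μ.1 false := this
        _ ≤ max (ν.1 false - μ.1 false) 0 := le_max_left _ _
        _ ≤ _ := h2
  · calc (0:ℝ) ≤ max (ν.1 true - μ.1 true) 0 := le_max_right _ _
      _ ≤ _ := h1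

lemma hmin_dirac (b : Bool) : hmin (dirac b) = 0 := by
  cases b <;> simp [hmin, dirac]

lemma hmin_half : hmin halfhalf = 1 / 2 := by simp [hmin, halfhalf]

lemma sSup_image_bounds {α : Type*} (f : α → ℝ) (S : Set α) (hS : S.Nonempty)
    (hf : ∀ a, f a ∈ Icc (0:ℝ) 1) : sSup (f '' S) ∈ Icc (0:ℝ) 1 := by
  obtain ⟨a, ha⟩ := hS
  constructor
  · exact le_trans (hf a).1 (le_csSup ⟨1, fun x ⟨y, _, hy⟩ => hy ▸ (hf y).2⟩ ⟨a, ha, rfl⟩)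
  · exact Real.sSup_le (fun x ⟨y, _, hy⟩ => hy ▸ (hf y).2) one_pos.le

/-- Failure of compositionality for `P ∘ D` with evaluation maps `sup` and `E`:
with `U = {δ_x, δ_y}` and `V = {δ_x, ½x+½y, δ_y}`, the composite lifting gives
distance at least `½`, while the lifting along the composed evaluation map gives `0`. -/
theorem stmt19 :
    (1 / 2 : ℝ) ≤
        Ksup (KE dDisc) {dirac true, dirac false} {dirac true, halfhalf, dirac false} ∧
    KsupE dDisc {dirac true, dirac false} {dirac true, halfhalf, dirac false} = 0 := by
  constructor
  · -- Part 1: 1/2 ≤ Ksup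
    have hU : hmin '' ({dirac true, dirac false} : Set DistB) = {0} := by
      rw [Set.image_pair, hmin_dirac, hmin_dirac]
      simp
    have hV : hmin '' ({dirac true, halfhalf, dirac false} : Set DistB) = {0, 1/2} := by
      rw [Set.image_insert_eq, Set.image_pair, hmin_dirac, hmin_dirac, hmin_half]
      ext x; simp; tauto
    have hmem : (1/2 : ℝ) ∈ {e | ∃ h : DistB → ℝ, (∀ μ, h μ ∈ Icc (0 : ℝ) 1) ∧
        (∀ μ ν, tsubR (h μ) (h ν) ≤ KE dDisc μ ν) ∧
        e = tsubR (sSup (h '' ({dirac true, dirac false} : Set DistB)))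
          (sSup (h '' ({dirac true, halfhalf, dirac false} : Set DistB)))} := by
      refine ⟨hmin, hmin_mem, hmin_nonexp, ?_⟩
      rw [hU, hV, csSup_singleton, csSup_pair]
      unfold tsubR
      norm_num
    have bdd : BddAbove {e | ∃ h : DistB → ℝ, (∀ μ, h μ ∈ Icc (0 : ℝ) 1) ∧
        (∀ μ ν, tsubR (h μ) (h ν) ≤ KE dDisc μ ν) ∧
        e = tsubR (sSup (h '' ({dirac true, dirac false} : Set DistB)))
          (sSup (h '' ({dirac true, halfhalf, dirac false} : Set DistB)))} := by
      refine ⟨1, fun e he => ?_⟩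
      obtain ⟨h, hh, _, rfl⟩ := he
      have b1 := sSup_image_bounds h {dirac true, dirac false} ⟨dirac true, by simp⟩ hh
      have b2 := sSup_image_bounds h {dirac true, halfhalf, dirac false} ⟨dirac true, by simp⟩ hh
      exact (tsubR_mem b1.1 b2.2).2
    exact le_csSup bdd hmem
  · -- Part 2: KsupE = 0
    unfold KsupE
    have hset : {e | ∃ g : Bool → ℝ, nonexpB dDisc g ∧
        e = tsubR (sSup ((fun μ => expectB μ g) '' ({dirac true, dirac false} : Set DistB)))
          (sSup ((fun μ => expectB μ g) '' ({dirac true, halfhalf, dirac false} : Set DistB)))}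
        = {0} := by
      ext e
      simp only [Set.mem_setOf_eq, Set.mem_singleton_iff]
      constructor
      · rintro ⟨g, hg, rfl⟩
        have hU : (fun μ => expectB μ g) '' ({dirac true, dirac false} : Set DistB)
            = {g true, g false} := by
          rw [Set.image_pair, expect_dirac, expect_dirac]
        have hV : (fun μ => expectB μ g) '' ({dirac true, halfhalf, dirac false} : Set DistB)
            = {g true, (g true + g false)/2, g false} := by
          rw [Set.image_insert_eq, Set.image_pair, expect_dirac, expect_dirac, expect_half]
        rw [hU, hV, csSup_pair]
        have : sSup ({g true, (g true + g false)/2, g false} : Set ℝ)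
            = g true ⊔ g false := by
          apply le_antisymm
          · apply Real.sSup_le
            · rintro x (rfl | rfl | rfl)
              · exact le_max_left _ _
              · rcases le_total (g true) (g false) with h | h
                · exact le_trans (by linarith) (le_max_right _ _)
                · exact le_trans (by linarith) (le_max_left _ _)
              · exact le_max_right _ _
            · exact le_trans (hg.1 true).1 (le_max_left _ _)
          · apply le_csSup
            · refine ⟨1, ?_⟩
              rintro x (rfl | rfl | rfl)
              · exact (hg.1 true).2
              · have := (hg.1 true).2; have := (hg.1 false).2; linarith
              · exact (hg.1 false).2
            · rcases le_total (g true) (g false) with h | h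
              · rw [max_eq_right h]; right; right; rfl
              · rw [max_eq_left h]; left; rfl
        rw [this]
        unfold tsubR
        simp
      · rintro rfl
        refine ⟨fun _ => 0, ⟨fun b => by norm_num, fun b₁ b₂ => ?_⟩, ?_⟩
        · unfold tsubR dDisc
          split <;> simp
        · have hc : (fun μ => expectB μ fun _ => (0:ℝ)) = fun _ => (0:ℝ) := by
            funext μ; simp [expectB]
          rw [hc, Set.Nonempty.image_const ⟨dirac true, by simp⟩ (0:ℝ),
            Set.Nonempty.image_const ⟨dirac true, by simp⟩ (0:ℝ), csSup_singleton]
          unfold tsubR; simp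
    rw [hset, csSup_singleton]
end
end
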